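/- Let u be a finite Lyndon word of the form u = x·a·y where a is a letter, and let b be a letter with a < b. Then uⁿxb is a Lyndon word for every natural number n. -/

import Mathlib

/-- A finite word is a Lyndon word if it is nonempty and lexicographically
strictly smaller than all of its proper nonempty suffixes. -/
def IsLyndon {A : Type*} [LinearOrder A] (w : List A) : Prop :=
  w ≠ [] ∧ ∀ i : ℕ, 0 < i → i < w.length → w < w.drop i

section Aux

variable {A : Type*} [LinearOrder A]

private lemma lt_strict_diff (pre : List A) {p q : A} (h : p < q) (s t : List A) :
    pre ++ p :: s < pre ++ q :: t := by
  show List.Lex (· < ·) _ _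
  induction pre with
  | nil => exact List.Lex.rel h
  | cons c cs ih => exact List.Lex.cons ih

private lemma lt_append_left (c : List A) {l l' : List A} (h : l < l') :
    c ++ l < c ++ l' := by
  show List.Lex (· < ·) _ _
  induction c with
  | nil => exact h
  | cons d ds ih => exact List.Lex.cons ih

private lemma exists_strict_diff {s t : List A} (h : s < t) (hnp : ¬ s <+: t) :
    ∃ pre p q s' t', p < q ∧ s = pre ++ p :: s' ∧ t = pre ++ q :: t' := by
  have h' : List.Lex (· < ·) s t := h
  clear h
  induction h' with
  | nil => exact absurd (List.nil_prefix) hnp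
  | @rel a₁ l₁ a₂ l₂ hr => exact ⟨[], a₁, a₂, l₁, l₂, hr, rfl, rfl⟩
  | @cons a l₁ l₂ hlex ih =>
    have hnp' : ¬ l₁ <+: l₂ := fun hp => hnp (by simpa [List.cons_prefix_cons] using hp)
    obtain ⟨pre, p, q, s', t', hpq, hs, ht⟩ := ih hnp'
    exact ⟨a :: pre, p, q, s', t', hpq, by simp [hs], by simp [ht]⟩

private lemma lt_append_of_lt_not_prefix {s t : List A} (h : s < t) (hnp : ¬ s <+: t)
    (s' t' : List A) : s ++ s' < t ++ t' := by
  obtain ⟨pre, p, q, sl, tl, hpq, hs, ht⟩ := exists_strict_diff h hnp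
  subst hs; subst ht
  simpa [List.append_assoc] using lt_strict_diff pre hpq (sl ++ s') (tl ++ t')

variable {x y : List A} {a b : A}

private lemma key_suffix (hu : IsLyndon (x ++ a :: y)) :
    ∀ i, 0 < i → i < (x ++ a :: y).length →
      (x ++ a :: y) < (x ++ a :: y).drop i ∧ ¬ (x ++ a :: y) <+: (x ++ a :: y).drop i := by
  intro i h1 h2
  refine ⟨hu.2 i h1 h2, fun hp => ?_⟩
  have := hp.length_le
  rw [List.length_drop] at this
  omega

private lemma tail_case (hu : IsLyndon (x ++ a :: y)) (hab : a < b) :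
    ∀ j, 0 < j → j ≤ x.length → x ++ [b] < x.drop j ++ [b] := by
  intro j hj1 hj2
  have hdj : (x ++ a :: y).drop j = x.drop j ++ a :: y := by
    rw [List.drop_append, Nat.sub_eq_zero_of_le hj2, List.drop_zero]
  have hjlen : j < (x ++ a :: y).length := by
    rw [List.length_append, List.length_cons]; omega
  obtain ⟨hlt, hnp⟩ := key_suffix hu j hj1 hjlen
  obtain ⟨pre, p, q, s', t', hpq, hs, ht⟩ := exists_strict_diff hlt hnp
  rw [hdj] at ht
  have hdlen : (List.drop j x).length = x.length - j := List.length_drop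
  by_cases hc : pre.length < (List.drop j x).length
  · -- first difference happens inside x.drop j
    have h1 : pre ++ [q] <+: List.drop j x := by
      have hpq' : pre ++ [q] <+: List.drop j x ++ a :: y := by
        rw [ht]; exact ⟨t', by simp⟩
      exact List.prefix_of_prefix_length_le hpq' (List.prefix_append _ _)
        (by simp only [List.length_append, List.length_singleton]; omega)
    have h2 : pre ++ [p] <+: x := by
      have hpp' : pre ++ [p] <+: x ++ a :: y := by
        rw [hs]; exact ⟨s', by simp⟩
      refine List.prefix_of_prefix_length_le hpp' (List.prefix_append _ _) ?_
      simp only [List.length_append, List.length_singleton]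
      omega
    obtain ⟨r1, hr1⟩ := h2
    obtain ⟨r2, hr2⟩ := h1
    have e1 : x ++ [b] = pre ++ p :: (r1 ++ [b]) := by rw [← hr1]; simp
    have e2 : List.drop j x ++ [b] = pre ++ q :: (r2 ++ [b]) := by rw [← hr2]; simp
    rw [e1, e2]
    exact lt_strict_diff pre hpq (r1 ++ [b]) (r2 ++ [b])
  · -- pre extends past x.drop j : the letter of u at position |x.drop j| is ≤ a
    push_neg at hc
    have hcpre : List.drop j x <+: pre := by
      have hprev : pre <+: List.drop j x ++ a :: y := by rw [ht]; exact ⟨q :: t', by simp⟩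
      exact List.prefix_of_prefix_length_le (List.prefix_append _ _) hprev hc
    have hmain : ∃ e rest, x ++ a :: y = List.drop j x ++ e :: rest ∧ e < b := by
      obtain ⟨z, hz⟩ := hcpre
      match z, hz with
      | [], hz =>
        -- pre = x.drop j, so q = a and p < a
        rw [List.append_nil] at hz
        rw [← hz] at ht
        have hqa : a :: y = q :: t' := List.append_cancel_left ht
        have hq : q = a := ((List.cons.injEq _ _ _ _).mp hqa).1.symm
        refine ⟨p, s', ?_, lt_trans (hq ▸ hpq) hab⟩
        rw [hs, ← hz]
      | d :: z', hz =>
        -- pre = x.drop j ++ d :: z' ; comparing with x.drop j ++ a :: y gives d = a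
        rw [← hz] at ht
        have heq : a :: y = d :: (z' ++ q :: t') := by
          have h2 : List.drop j x ++ a :: y = List.drop j x ++ d :: (z' ++ q :: t') := by
            rw [ht]; simp
          exact List.append_cancel_left h2
        have hda : d = a := ((List.cons.injEq _ _ _ _).mp heq).1.symm
        refine ⟨a, z' ++ p :: s', ?_, hab⟩
        rw [hs, ← hz, hda]
        simp
    obtain ⟨e, rest, hue, heb⟩ := hmain
    have hce : List.drop j x ++ [e] <+: x := by
      have h1 : List.drop j x ++ [e] <+: x ++ a :: y := by
        rw [hue]; exact ⟨rest, by simp⟩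
      refine List.prefix_of_prefix_length_le h1 (List.prefix_append _ _) ?_
      simp only [List.length_append, List.length_singleton]
      omega
    obtain ⟨r1, hr1⟩ := hce
    have e1 : x ++ [b] = List.drop j x ++ e :: (r1 ++ [b]) := by
      conv_lhs => rw [← hr1]
      simp
    conv_lhs => rw [e1]
    have e2 : List.drop j x ++ [b] = List.drop j x ++ b :: ([] : List A) := by simp
    rw [e2]
    exact lt_strict_diff (List.drop j x) heb (r1 ++ [b]) []

end Aux

theorem lyndon_pow_prefix_increase_letter {A : Type*} [LinearOrder A]
    (x y : List A) (a b : A)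
    (hu : IsLyndon (x ++ a :: y)) (hab : a < b) (n : ℕ) :
    IsLyndon ((List.replicate n (x ++ a :: y)).flatten ++ (x ++ [b])) := by
  set u := x ++ a :: y with hu_def
  set w : ℕ → List A := fun m => (List.replicate m u).flatten ++ (x ++ [b]) with hw_def
  have hwsucc : ∀ m, w (m + 1) = u ++ w m := by
    intro m
    simp [hw_def, List.replicate_succ, List.append_assoc]
  have hulen : 0 < u.length := by rw [hu_def]; simp
  -- w (m+1) < w m
  have hdec : ∀ m, w (m + 1) < w m := by
    intro m
    induction m with
    | zero =>
      rw [hwsucc]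
      have h1 : u ++ w 0 = x ++ a :: (y ++ (x ++ [b])) := by
        simp [hu_def, hw_def, List.append_assoc]
      have h2 : w 0 = x ++ b :: ([] : List A) := by simp [hw_def]
      rw [h1, h2]
      exact lt_strict_diff x hab _ _
    | succ m ih =>
      have h := lt_append_left u ih
      rw [← hwsucc (m + 1), ← hwsucc m] at h
      exact h
  have hmain : ∀ m, ∀ i, 0 < i → i < (w m).length → w m < (w m).drop i := by
    intro m
    induction m with
    | zero =>
      intro i hi1 hi2
      have hlen : (w 0).length = x.length + 1 := by simp [hw_def]
      have hix : i ≤ x.length := by omega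
      have hdrop : (w 0).drop i = x.drop i ++ [b] := by
        show (x ++ [b]).drop i = x.drop i ++ [b]
        rw [List.drop_append, Nat.sub_eq_zero_of_le hix, List.drop_zero]
      rw [hdrop]
      exact tail_case hu hab i hi1 hix
    | succ m ih =>
      intro i hi1 hi2
      rw [hwsucc] at hi2 ⊢
      rcases lt_trichotomy i u.length with hlt | heq | hgt
      · have hdrop : (u ++ w m).drop i = u.drop i ++ w m := by
          rw [List.drop_append, Nat.sub_eq_zero_of_le (le_of_lt hlt),
            List.drop_zero]
        rw [hdrop]
        obtain ⟨h1, h2⟩ := key_suffix hu i hi1 hlt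
        exact lt_append_of_lt_not_prefix h1 h2 (w m) (w m)
      · have hdrop : (u ++ w m).drop i = w m := by
          rw [List.drop_append, heq]
          simp
        rw [hdrop, ← hwsucc]
        exact hdec m
      · have hdrop : (u ++ w m).drop i = (w m).drop (i - u.length) := by
          rw [List.drop_append, List.drop_eq_nil_of_le (le_of_lt hgt),
            List.nil_append]
        rw [hdrop]
        have hlen2 : i - u.length < (w m).length := by
          rw [List.length_append] at hi2; omega
        calc u ++ w m < w m := by rw [← hwsucc]; exact hdec m
          _ < (w m).drop (i - u.length) := ih _ (by omega) hlen2
  constructor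
  · simp
  · intro i hi1 hi2
    exact hmain n i hi1 hi2
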